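/- Let 𝔄 be an amenable Banach algebra and let 𝔍 be a closed two-sided ideal of 𝔄 possessing a bounded approximate identity. Then 𝔍 is itself an amenable Banach algebra. -/

import Mathlib

open scoped TensorProduct

/-- The multiplication of `A ⊗ Aᵒᵖ` on the algebraic tensor product:
`(a ⊗ b) • (c ⊗ d) = (a * c) ⊗ (d * b)`. -/
noncomputable def opMul (A : Type*) [NonUnitalNormedRing A] [NormedSpace ℂ A]
    [IsScalarTower ℂ A A] [SMulCommClass ℂ A A] :
    (A ⊗[ℂ] A) →ₗ[ℂ] (A ⊗[ℂ] A) →ₗ[ℂ] (A ⊗[ℂ] A) :=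
  TensorProduct.lift <|
    LinearMap.compl₂
      ((TensorProduct.mapBilinear (RingHom.id ℂ) A A A A).comp (LinearMap.mul ℂ A))
      ((LinearMap.mul ℂ A).flip)

/-- The projective tensor norm on the algebraic tensor product `A ⊗ A`. -/
noncomputable def projNorm (A : Type*) [NonUnitalNormedRing A] [NormedSpace ℂ A]
    [IsScalarTower ℂ A A] [SMulCommClass ℂ A A] (u : A ⊗[ℂ] A) : ℝ :=
  sInf { c : ℝ | ∃ l : List (A × A),
    (l.map fun p => p.1 ⊗ₜ[ℂ] p.2).sum = u ∧ (l.map fun p => ‖p.1‖ * ‖p.2‖).sum = c }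

section machinery
variable (A : Type*) [NonUnitalNormedRing A] [NormedSpace ℂ A]
    [IsScalarTower ℂ A A] [SMulCommClass ℂ A A]

noncomputable def repSum (l : List (A × A)) : A ⊗[ℂ] A := (l.map fun p => p.1 ⊗ₜ[ℂ] p.2).sum
noncomputable def repNorm (l : List (A × A)) : ℝ := (l.map fun p => ‖p.1‖ * ‖p.2‖).sum

variable {A}

lemma repNorm_nonneg (l : List (A × A)) : 0 ≤ repNorm A l := by
  apply List.sum_nonneg; intro x hx
  simp only [List.mem_map] at hx
  obtain ⟨p, _, rfl⟩ := hx
  positivity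

lemma repSum_cons (p : A × A) (l : List (A × A)) :
    repSum A (p :: l) = p.1 ⊗ₜ[ℂ] p.2 + repSum A l := by simp [repSum]

lemma repSum_append (l₁ l₂ : List (A × A)) :
    repSum A (l₁ ++ l₂) = repSum A l₁ + repSum A l₂ := by
  simp [repSum]

lemma repNorm_append (l₁ l₂ : List (A × A)) :
    repNorm A (l₁ ++ l₂) = repNorm A l₁ + repNorm A l₂ := by
  simp [repNorm]

lemma repSum_mem_set (l : List (A × A)) :
    repNorm A l ∈ { c : ℝ | ∃ l' : List (A × A),
      (l'.map fun p => p.1 ⊗ₜ[ℂ] p.2).sum = repSum A l ∧ (l'.map fun p => ‖p.1‖ * ‖p.2‖).sum = c } :=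
  ⟨l, rfl, rfl⟩

lemma projNorm_le_repNorm (l : List (A × A)) : projNorm A (repSum A l) ≤ repNorm A l := by
  apply csInf_le
  · refine ⟨0, ?_⟩
    rintro c ⟨l', -, rfl⟩
    apply List.sum_nonneg; intro x hx
    simp only [List.mem_map] at hx
    obtain ⟨p, -, rfl⟩ := hx
    positivity
  · exact repSum_mem_set l

lemma exists_rep (u : A ⊗[ℂ] A) : ∃ l : List (A × A), repSum A l = u := by
  induction u with
  | zero => exact ⟨[], rfl⟩
  | tmul x y => exact ⟨[(x, y)], by simp [repSum]⟩
  | add x y hx hy =>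
    obtain ⟨l₁, rfl⟩ := hx; obtain ⟨l₂, rfl⟩ := hy
    exact ⟨l₁ ++ l₂, repSum_append l₁ l₂⟩

lemma exists_rep_lt {u : A ⊗[ℂ] A} {c : ℝ} (h : projNorm A u < c) :
    ∃ l : List (A × A), repSum A l = u ∧ repNorm A l < c := by
  obtain ⟨l₀, rfl⟩ := exists_rep u
  obtain ⟨d, ⟨l, hl, rfl⟩, hdc⟩ := exists_lt_of_csInf_lt ⟨_, repSum_mem_set l₀⟩ h
  exact ⟨l, hl, hdc⟩

lemma repSum_bind {β : Type*} (l : List β) (f : β → List (A × A)) :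
    repSum A (l.flatMap f) = (l.map fun x => repSum A (f x)).sum := by
  induction l with
  | nil => rfl
  | cons a t ih => simp only [List.flatMap_cons, repSum_append, ih, List.map_cons, List.sum_cons]

lemma repNorm_bind {β : Type*} (l : List β) (f : β → List (A × A)) :
    repNorm A (l.flatMap f) = (l.map fun x => repNorm A (f x)).sum := by
  induction l with
  | nil => rfl
  | cons a t ih => simp only [List.flatMap_cons, repNorm_append, ih, List.map_cons, List.sum_cons]

variable {B : Type*} [NonUnitalNormedRing B] [NormedSpace ℂ B]
    [IsScalarTower ℂ B B] [SMulCommClass ℂ B B]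

lemma map_repSum (f g : A →ₗ[ℂ] B) (l : List (A × A)) :
    TensorProduct.map f g (repSum A l) = repSum B (l.map fun p => (f p.1, g p.2)) := by
  induction l with
  | nil => simp [repSum]
  | cons a t ih => simp [repSum, List.map_cons, List.sum_cons, map_add, ih] at ih ⊢; rw [ih]

lemma opMul_tmul (x y a b : A) : opMul A (x ⊗ₜ[ℂ] y) (a ⊗ₜ[ℂ] b) = (x*a) ⊗ₜ[ℂ] (b*y) := by
  simp [opMul, TensorProduct.mapBilinear]

lemma opMul_tmul_repSum (x y : A) (l : List (A × A)) :
    opMul A (x ⊗ₜ[ℂ] y) (repSum A l) = repSum A (l.map fun q => (x * q.1, q.2 * y)) := by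
  induction l with
  | nil => simp [repSum]
  | cons a t ih => simp [repSum, List.map_cons, List.sum_cons, map_add, opMul_tmul] at ih ⊢; rw [ih]

lemma opMul_repSum (lu lr : List (A × A)) :
    opMul A (repSum A lu) (repSum A lr) =
      repSum A (lu.flatMap fun p => lr.map fun q => (p.1 * q.1, q.2 * p.2)) := by
  rw [repSum_bind]
  induction lu with
  | nil => simp [repSum]
  | cons a t ih =>
    rw [repSum_cons, map_add, LinearMap.add_apply, opMul_tmul_repSum, ih,
      List.map_cons, List.sum_cons]

end machinery

noncomputable instance normedSpaceJ {A : Type*} [NonUnitalNormedRing A] [NormedSpace ℂ A]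
    (J : NonUnitalSubalgebra ℂ A) : NormedSpace ℂ J :=
  SubmoduleClass.toNormedSpace (R := ℂ) J

section Jlayer
variable {A : Type*} [NonUnitalNormedRing A] [NormedSpace ℂ A]
    [IsScalarTower ℂ A A] [SMulCommClass ℂ A A]
variable (J : NonUnitalSubalgebra ℂ A)

def inclJ : J →ₗ[ℂ] A where
  toFun x := x
  map_add' x y := rfl
  map_smul' c x := rfl

@[simp] lemma inclJ_apply (x : J) : inclJ J x = (x : A) := rfl

noncomputable def rmulL (hright : ∀ a : A, ∀ x ∈ J, x * a ∈ J) (z : J) : A →ₗ[ℂ] J where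
  toFun a := ⟨(z : A) * a, hright a z z.2⟩
  map_add' a b := by ext; simp [mul_add]
  map_smul' c a := by ext; simp [mul_smul_comm]

noncomputable def lmulL (hleft : ∀ a : A, ∀ x ∈ J, a * x ∈ J) (z : J) : A →ₗ[ℂ] J where
  toFun a := ⟨a * (z : A), hleft a z z.2⟩
  map_add' a b := by ext; simp [add_mul]
  map_smul' c a := by ext; simp [smul_mul_assoc]

variable (hleft : ∀ a : A, ∀ x ∈ J, a * x ∈ J) (hright : ∀ a : A, ∀ x ∈ J, x * a ∈ J)

@[simp] lemma rmulL_apply (z : J) (a : A) : ((rmulL J hright z) a : A) = (z : A) * a := rfl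
@[simp] lemma lmulL_apply (z : J) (a : A) : ((lmulL J hleft z) a : A) = a * (z : A) := rfl
@[simp] lemma norm_J (z : J) : ‖z‖ = ‖(z : A)‖ := rfl

lemma mul'_map_incl (v : J ⊗[ℂ] J) :
    LinearMap.mul' ℂ A (TensorProduct.map (inclJ J) (inclJ J) v)
      = ((LinearMap.mul' ℂ J v : J) : A) := by
  induction v with
  | zero => simp
  | tmul x y => simp
  | add x y hx hy => simp [hx, hy]

lemma mul'_psi (eJ : J) (w : A ⊗[ℂ] A) :
    ((LinearMap.mul' ℂ J (TensorProduct.map (rmulL J hright eJ) (lmulL J hleft eJ) w) : J) : A)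
      = (eJ : A) * (LinearMap.mul' ℂ A w) * (eJ : A) := by
  induction w with
  | zero => simp
  | tmul a b => simp [mul_assoc]
  | add x y hx hy => simp [hx, hy, mul_add, add_mul]
end Jlayer

-- test generic list lemma
lemma list_sum_sub_pointwise {β M : Type*} [AddCommGroup M] (l : List β) (F G H : β → M)
    (h : ∀ x ∈ l, F x - G x = H x) :
    (l.map F).sum - (l.map G).sum = (l.map H).sum := by
  induction l with
  | nil => simp
  | cons a t ih =>
    simp only [List.map_cons, List.sum_cons]
    rw [← ih fun x hx => h x (List.mem_cons_of_mem a hx), ← h a List.mem_cons_self]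
    abel

section identities
variable {A : Type*} [NonUnitalNormedRing A] [NormedSpace ℂ A]
    [IsScalarTower ℂ A A] [SMulCommClass ℂ A A]
variable (J : NonUnitalSubalgebra ℂ A)
variable (hleft : ∀ a : A, ∀ x ∈ J, a * x ∈ J) (hright : ∀ a : A, ∀ x ∈ J, x * a ∈ J)

lemma pointwise1 (eJ p1 p2 : J) (q1 q2 : A) :
    (p1 * rmulL J hright eJ q1) ⊗ₜ[ℂ] (lmulL J hleft eJ q2 * p2)
      - (rmulL J hright eJ ((p1:A) * q1)) ⊗ₜ[ℂ] (lmulL J hleft eJ (q2 * (p2:A)))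
    = (rmulL J hright (p1 * eJ - eJ * p1) q1) ⊗ₜ[ℂ] (lmulL J hleft p2 (q2 * (eJ:A)))
      + (rmulL J hright eJ ((p1:A) * q1)) ⊗ₜ[ℂ]
          (lmulL J hleft p2 (q2 * (eJ:A)) - lmulL J hleft eJ (q2 * (p2:A))) := by
  have hB : lmulL J hleft eJ q2 * p2 = lmulL J hleft p2 (q2 * (eJ:A)) := by
    apply Subtype.ext; simp [mul_assoc]
  have hA : p1 * rmulL J hright eJ q1 - rmulL J hright eJ ((p1:A) * q1)
      = rmulL J hright (p1 * eJ - eJ * p1) q1 := by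
    apply Subtype.ext; simp [sub_mul, mul_assoc]
  rw [hB, ← hA, TensorProduct.sub_tmul, TensorProduct.tmul_sub]
  abel

lemma pointwise3 (eJ p1 p2 : J) :
    (rmulL J hright eJ (p1:A)) ⊗ₜ[ℂ] (lmulL J hleft eJ (p2:A)) - p1 ⊗ₜ[ℂ] p2
    = (rmulL J hright eJ (p1:A) - p1) ⊗ₜ[ℂ] (lmulL J hleft eJ (p2:A))
      + p1 ⊗ₜ[ℂ] (lmulL J hleft eJ (p2:A) - p2) := by
  rw [TensorProduct.sub_tmul, TensorProduct.tmul_sub]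
  abel
end identities

section identities2
variable {A : Type*} [NonUnitalNormedRing A] [NormedSpace ℂ A]
    [IsScalarTower ℂ A A] [SMulCommClass ℂ A A]
variable (J : NonUnitalSubalgebra ℂ A)
variable (hleft : ∀ a : A, ∀ x ∈ J, a * x ∈ J) (hright : ∀ a : A, ∀ x ∈ J, x * a ∈ J)

lemma I3 (eJ : J) (lu : List (J × J)) :
    TensorProduct.map (rmulL J hright eJ) (lmulL J hleft eJ)
        (TensorProduct.map (inclJ J) (inclJ J) (repSum J lu))
      - repSum J lu
    = repSum J (lu.flatMap fun p =>
        [(rmulL J hright eJ ((p.1:A)) - p.1, lmulL J hleft eJ ((p.2:A))),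
         (p.1, lmulL J hleft eJ ((p.2:A)) - p.2)]) := by
  rw [map_repSum, map_repSum, List.map_map, repSum_bind]
  simp only [repSum, List.map_map]
  refine list_sum_sub_pointwise lu _ _ _ ?_
  intro p _
  simp only [Function.comp, List.map_cons, List.map_nil, List.sum_cons, List.sum_nil,
    add_zero, inclJ_apply]
  exact pointwise3 J hleft hright eJ p.1 p.2
end identities2

section identities3
variable {A : Type*} [NonUnitalNormedRing A] [NormedSpace ℂ A]
    [IsScalarTower ℂ A A] [SMulCommClass ℂ A A]
variable (J : NonUnitalSubalgebra ℂ A)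
variable (hleft : ∀ a : A, ∀ x ∈ J, a * x ∈ J) (hright : ∀ a : A, ∀ x ∈ J, x * a ∈ J)

lemma I1 (eJ : J) (lu : List (J × J)) (lr : List (A × A)) :
    opMul (↥J) (repSum J lu)
        (TensorProduct.map (rmulL J hright eJ) (lmulL J hleft eJ) (repSum A lr))
      - TensorProduct.map (rmulL J hright eJ) (lmulL J hleft eJ)
          (opMul A (TensorProduct.map (inclJ J) (inclJ J) (repSum J lu)) (repSum A lr))
    = repSum J (lu.flatMap fun p => lr.flatMap fun q =>
        [(rmulL J hright (p.1 * eJ - eJ * p.1) q.1, lmulL J hleft p.2 (q.2 * (eJ:A))),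
         (rmulL J hright eJ ((p.1:A) * q.1),
          lmulL J hleft p.2 (q.2 * (eJ:A)) - lmulL J hleft eJ (q.2 * (p.2:A)))]) := by
  rw [map_repSum (rmulL J hright eJ) (lmulL J hleft eJ) lr, opMul_repSum,
    map_repSum (inclJ J) (inclJ J) lu, opMul_repSum, map_repSum]
  simp only [List.map_flatMap, List.flatMap_map, List.map_map]
  rw [repSum_bind, repSum_bind, repSum_bind]
  refine list_sum_sub_pointwise lu _ _ _ ?_
  intro p _
  simp only [Function.comp, List.map_map, repSum_bind]
  simp only [repSum, List.map_map]
  refine list_sum_sub_pointwise lr _ _ _ ?_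
  intro q _
  simp only [Function.comp, List.map_cons, List.map_nil, List.sum_cons, List.sum_nil,
    add_zero, inclJ_apply]
  exact pointwise1 J hleft hright eJ p.1 p.2 q.1 q.2
end identities3

section helpers
variable {A : Type*} [NonUnitalNormedRing A] [NormedSpace ℂ A]
    [IsScalarTower ℂ A A] [SMulCommClass ℂ A A]

lemma repNorm_flatMap_le {β : Type*} (l : List β) (f : β → List (A × A)) (g : β → ℝ)
    (h : ∀ x ∈ l, repNorm A (f x) ≤ g x) : repNorm A (l.flatMap f) ≤ (l.map g).sum := by
  rw [repNorm_bind]; exact List.sum_le_sum h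

lemma repNorm_pair (a b : A × A) :
    repNorm A [a, b] = ‖a.1‖ * ‖a.2‖ + ‖b.1‖ * ‖b.2‖ := by simp [repNorm]

lemma repNorm_map_le (l : List (A × A)) {B : Type*} [NonUnitalNormedRing B]
    [NormedSpace ℂ B] [IsScalarTower ℂ B B] [SMulCommClass ℂ B B]
    (f : A × A → B × B) (c : ℝ) (hc : 0 ≤ c)
    (h : ∀ q ∈ l, ‖(f q).1‖ * ‖(f q).2‖ ≤ c * (‖q.1‖ * ‖q.2‖)) :
    repNorm B (l.map f) ≤ c * repNorm A l := by
  rw [repNorm, List.map_map, repNorm, ← List.sum_map_mul_left]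
  exact List.sum_le_sum h
end helpers

/-- Amenability of a Banach algebra `A` (Helemskiĭ's characterization): `A`
has a bounded approximate identity and the left ideal `ker Δ` of `A ⊗̂ Aᵒᵖ`
has a bounded right approximate identity. -/
def IsAmenable (A : Type*) [NonUnitalNormedRing A] [NormedSpace ℂ A]
    [IsScalarTower ℂ A A] [SMulCommClass ℂ A A] : Prop :=
  (∃ C > (0 : ℝ), ∀ ε > (0 : ℝ), ∀ S : Finset A, ∃ e : A, ‖e‖ ≤ C ∧
      ∀ x ∈ S, ‖e * x - x‖ < ε ∧ ‖x * e - x‖ < ε) ∧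
  (∃ C > (0 : ℝ), ∀ ε > (0 : ℝ), ∀ S : Finset (A ⊗[ℂ] A),
      (∀ u ∈ S, u ∈ LinearMap.ker (LinearMap.mul' ℂ A)) →
      ∃ r ∈ LinearMap.ker (LinearMap.mul' ℂ A), projNorm A r ≤ C ∧
        ∀ u ∈ S, projNorm A (opMul A u r - u) < ε)

set_option maxHeartbeats 2000000 in
/-- A closed two-sided ideal with a bounded approximate identity
in an amenable Banach algebra is itself an amenable Banach algebra. -/
theorem ideal_amenable (A : Type*) [NonUnitalNormedRing A] [NormedSpace ℂ A]
    [IsScalarTower ℂ A A] [SMulCommClass ℂ A A] [CompleteSpace A]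
    (hA : IsAmenable A) (J : NonUnitalSubalgebra ℂ A)
    (hJclosed : IsClosed (J : Set A))
    (hleft : ∀ a : A, ∀ x ∈ J, a * x ∈ J)
    (hright : ∀ a : A, ∀ x ∈ J, x * a ∈ J)
    (hbai : ∃ C > (0 : ℝ), ∀ ε > (0 : ℝ), ∀ S : Finset A, (∀ x ∈ S, x ∈ J) →
      ∃ e ∈ J, ‖e‖ ≤ C ∧ ∀ x ∈ S, ‖e * x - x‖ < ε ∧ ‖x * e - x‖ < ε) :
    @IsAmenable J _ (SubmoduleClass.toNormedSpace (R := ℂ) J) _ _ := by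
  classical
  obtain ⟨-, ⟨CA, hCA, hA2⟩⟩ := hA
  obtain ⟨C1, hC1, hJbai⟩ := hbai
  constructor
  · refine ⟨C1, hC1, ?_⟩
    intro ε hε S
    obtain ⟨e, heJ, hebd, he⟩ := hJbai ε hε (Finset.image (Subtype.val : J → A) S)
      (by rintro x hx; obtain ⟨y, -, rfl⟩ := Finset.mem_image.mp hx; exact y.2)
    refine ⟨⟨e, heJ⟩, hebd, ?_⟩
    intro x hx
    have := he (x : A) (Finset.mem_image_of_mem (Subtype.val : J → A) hx)
    exact this
  · refine ⟨C1^2 * (CA + 1), by positivity, ?_⟩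
    intro ε hε S hS
    choose L hL using (exists_rep (A := ↥J))
    set Ku : (↥J) ⊗[ℂ] (↥J) → ℝ := fun u => ((L u).map fun p => 2 + ‖p.1‖ + ‖p.2‖).sum
      with hKu_def
    have hKu_nonneg : ∀ u, 0 ≤ Ku u := by
      intro u; apply List.sum_nonneg; intro x hx
      obtain ⟨p, -, rfl⟩ := List.mem_map.mp hx; positivity
    set K : ℝ := 1 + (S.toList.map Ku).sum with hK_def
    have hKpos : 0 < K := by
      have h0 : 0 ≤ (S.toList.map Ku).sum := List.sum_nonneg (by
        intro x hx; obtain ⟨u, -, rfl⟩ := List.mem_map.mp hx; exact hKu_nonneg u)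
      rw [hK_def]; linarith
    have hKu_le : ∀ u ∈ S, Ku u ≤ K := by
      intro u hu
      have h1 : Ku u ≤ (S.toList.map Ku).sum :=
        List.single_le_sum (by
          intro x hx; obtain ⟨v, -, rfl⟩ := List.mem_map.mp hx; exact hKu_nonneg v) _
          (List.mem_map_of_mem (f := Ku) (Finset.mem_toList.mpr hu))
      rw [hK_def]; linarith
    set δ : ℝ := ε / (2 * K * (2*C1*(CA+1) + 1 + C1)) with hδ_def
    have hδ : 0 < δ := by
      have h1 : (0:ℝ) < 2*C1*(CA+1) + 1 + C1 := by nlinarith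
      exact div_pos hε (mul_pos (mul_pos (by norm_num) hKpos) h1)
    set ε₂ : ℝ := ε / (2*(C1^2+1)) with hε₂_def
    have hε₂ : 0 < ε₂ := div_pos hε (by positivity)
    set E : Finset A :=
      (S.toList.flatMap fun u => (L u).flatMap fun p => [(p.1 : A), (p.2 : A)]).toFinset
      with hE_def
    have hEJ : ∀ x ∈ E, x ∈ J := by
      intro x hx
      rw [hE_def, List.mem_toFinset] at hx
      obtain ⟨u, -, hx2⟩ := List.mem_flatMap.mp hx
      obtain ⟨p, -, hx3⟩ := List.mem_flatMap.mp hx2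
      simp only [List.mem_cons, List.mem_singleton, List.not_mem_nil, or_false] at hx3
      rcases hx3 with rfl | rfl
      · exact p.1.2
      · exact p.2.2
    obtain ⟨e, heJ, hebd, he⟩ := hJbai δ hδ E hEJ
    have heE : ∀ u ∈ S, ∀ p ∈ L u,
        (‖e * (p.1:A) - (p.1:A)‖ < δ ∧ ‖(p.1:A) * e - (p.1:A)‖ < δ) ∧
        (‖e * (p.2:A) - (p.2:A)‖ < δ ∧ ‖(p.2:A) * e - (p.2:A)‖ < δ) := by
      intro u hu p hp
      have m1 : (p.1 : A) ∈ E := by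
        rw [hE_def, List.mem_toFinset]
        exact List.mem_flatMap.mpr ⟨u, Finset.mem_toList.mpr hu,
          List.mem_flatMap.mpr ⟨p, hp, by simp⟩⟩
      have m2 : (p.2 : A) ∈ E := by
        rw [hE_def, List.mem_toFinset]
        exact List.mem_flatMap.mpr ⟨u, Finset.mem_toList.mpr hu,
          List.mem_flatMap.mpr ⟨p, hp, by simp⟩⟩
      exact ⟨he _ m1, he _ m2⟩
    set eJ : ↥J := ⟨e, heJ⟩ with heJ_def
    have hkermem : ∀ v ∈ S.image (TensorProduct.map (inclJ J) (inclJ J)),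
        v ∈ LinearMap.ker (LinearMap.mul' ℂ A) := by
      intro v hv
      obtain ⟨u, hu, rfl⟩ := Finset.mem_image.mp hv
      rw [LinearMap.mem_ker, mul'_map_incl]
      have h0 := hS u hu
      rw [LinearMap.mem_ker] at h0
      rw [h0]
      rfl
    obtain ⟨rA, hrAker, hrAnorm, hrA⟩ :=
      hA2 ε₂ hε₂ (S.image (TensorProduct.map (inclJ J) (inclJ J))) hkermem
    obtain ⟨lr, hlr, hlrn⟩ := exists_rep_lt (show projNorm A rA < CA + 1 by linarith)
    have hlrn0 : 0 ≤ repNorm A lr := repNorm_nonneg lr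
    rw [LinearMap.mem_ker] at hrAker
    refine ⟨TensorProduct.map (rmulL J hright eJ) (lmulL J hleft eJ) rA, ?_, ?_, ?_⟩
    · rw [LinearMap.mem_ker]
      apply Subtype.ext
      have h1 := mul'_psi J hleft hright eJ rA
      rw [hrAker] at h1
      simpa using h1
    · rw [← hlr, map_repSum]
      refine le_trans (projNorm_le_repNorm _) (le_trans
        (repNorm_map_le lr _ (C1^2) (by positivity) ?_) ?_)
      · intro q hq
        dsimp only
        have n1 : ‖(rmulL J hright eJ q.1 : J)‖ ≤ C1 * ‖q.1‖ := by
          rw [norm_J, rmulL_apply]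
          refine le_trans (norm_mul_le _ _) ?_
          exact mul_le_mul_of_nonneg_right hebd (norm_nonneg _)
        have n2 : ‖(lmulL J hleft eJ q.2 : J)‖ ≤ ‖q.2‖ * C1 := by
          rw [norm_J, lmulL_apply]
          refine le_trans (norm_mul_le _ _) ?_
          exact mul_le_mul_of_nonneg_left hebd (norm_nonneg _)
        have h3 := mul_le_mul n1 n2 (norm_nonneg (lmulL J hleft eJ q.2))
          (by positivity : (0:ℝ) ≤ C1 * ‖q.1‖)
        nlinarith [norm_nonneg q.1, norm_nonneg q.2]
      · nlinarith
    · intro u huS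
      obtain ⟨l2, hl2, hl2n⟩ :=
        exists_rep_lt (hrA _ (Finset.mem_image_of_mem (TensorProduct.map (inclJ J) (inclJ J)) huS))
      have hl2n0 : 0 ≤ repNorm A l2 := repNorm_nonneg l2
      have e1 := I1 J hleft hright eJ (L u) lr
      have e3 := I3 J hleft hright eJ (L u)
      rw [hL u, hlr] at e1
      rw [hL u] at e3
      have e2 : TensorProduct.map (rmulL J hright eJ) (lmulL J hleft eJ)
            (opMul A (TensorProduct.map (inclJ J) (inclJ J) u) rA)
          - TensorProduct.map (rmulL J hright eJ) (lmulL J hleft eJ)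
            (TensorProduct.map (inclJ J) (inclJ J) u)
          = repSum (↥J) (l2.map fun q => (rmulL J hright eJ q.1, lmulL J hleft eJ q.2)) := by
        rw [← map_sub, ← hl2, map_repSum]
      have equal : opMul (↥J) u
            (TensorProduct.map (rmulL J hright eJ) (lmulL J hleft eJ) rA) - u
          = repSum (↥J)
            (((L u).flatMap fun p => lr.flatMap fun q =>
              [(rmulL J hright (p.1 * eJ - eJ * p.1) q.1, lmulL J hleft p.2 (q.2 * (eJ:A))),
               (rmulL J hright eJ ((p.1:A) * q.1),
                lmulL J hleft p.2 (q.2 * (eJ:A)) - lmulL J hleft eJ (q.2 * (p.2:A)))])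
            ++ (l2.map fun q => (rmulL J hright eJ q.1, lmulL J hleft eJ q.2))
            ++ ((L u).flatMap fun p =>
              [(rmulL J hright eJ ((p.1:A)) - p.1, lmulL J hleft eJ ((p.2:A))),
               (p.1, lmulL J hleft eJ ((p.2:A)) - p.2)])) := by
        rw [repSum_append, repSum_append, ← e1, ← e2, ← e3]
        abel
      rw [equal]
      clear equal e1 e2 e3 hl2 hrA hkermem hA2 hJbai hS hEJ he hL hlr
      refine lt_of_le_of_lt (projNorm_le_repNorm _) ?_
      rw [repNorm_append, repNorm_append]
      have B1 : repNorm (↥J) ((L u).flatMap fun p => lr.flatMap fun q =>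
            [(rmulL J hright (p.1 * eJ - eJ * p.1) q.1, lmulL J hleft p.2 (q.2 * (eJ:A))),
             (rmulL J hright eJ ((p.1:A) * q.1),
              lmulL J hleft p.2 (q.2 * (eJ:A)) - lmulL J hleft eJ (q.2 * (p.2:A)))])
          ≤ (2*δ*C1*(CA+1)) * Ku u := by
        refine le_trans (repNorm_flatMap_le _ _
          (fun p => (2*δ*C1*(CA+1)) * (2 + ‖p.1‖ + ‖p.2‖)) ?_) ?_
        · intro p hp
          obtain ⟨⟨ha1, ha2⟩, ⟨hb1, hb2⟩⟩ := heE u huS p hp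
          refine le_trans (repNorm_flatMap_le _ _
            (fun q => (2*δ*C1*(‖(p.1:A)‖ + ‖(p.2:A)‖)) * (‖q.1‖ * ‖q.2‖)) ?_) ?_
          · intro q hq
            simp only [repNorm_pair]
            have c1 : ‖(rmulL J hright (p.1 * eJ - eJ * p.1) q.1 : J)‖ ≤ (2*δ) * ‖q.1‖ := by
              rw [norm_J, rmulL_apply]
              refine le_trans (norm_mul_le _ _) (mul_le_mul_of_nonneg_right ?_ (norm_nonneg _))
              have hsplit : ((p.1 * eJ - eJ * p.1 : J) : A)
                  = ((p.1:A) * e - (p.1:A)) + ((p.1:A) - e * (p.1:A)) := by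
                show (p.1:A) * e - e * (p.1:A) = _
                abel
              rw [hsplit]
              refine le_trans (norm_add_le _ _) ?_
              rw [← norm_neg ((p.1:A) - e * (p.1:A))]
              have : -((p.1:A) - e * (p.1:A)) = e * (p.1:A) - (p.1:A) := by abel
              rw [this]
              linarith
            have c2 : ‖(lmulL J hleft p.2 (q.2 * (eJ:A)) : J)‖ ≤ ‖q.2‖ * C1 * ‖(p.2:A)‖ := by
              rw [norm_J, lmulL_apply]
              refine le_trans (norm_mul_le _ _) (mul_le_mul_of_nonneg_right
                (le_trans (norm_mul_le _ _)
                  (mul_le_mul_of_nonneg_left hebd (norm_nonneg _))) (norm_nonneg _))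
            have c3 : ‖(rmulL J hright eJ ((p.1:A) * q.1) : J)‖ ≤ C1 * ‖(p.1:A)‖ * ‖q.1‖ := by
              rw [norm_J, rmulL_apply]
              calc ‖(eJ:A) * ((p.1:A) * q.1)‖ ≤ ‖(eJ:A)‖ * ‖(p.1:A) * q.1‖ := norm_mul_le _ _
                _ ≤ ‖(eJ:A)‖ * (‖(p.1:A)‖ * ‖q.1‖) :=
                    mul_le_mul_of_nonneg_left (norm_mul_le _ _) (norm_nonneg _)
                _ ≤ C1 * (‖(p.1:A)‖ * ‖q.1‖) :=
                    mul_le_mul_of_nonneg_right hebd (by positivity)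
                _ = C1 * ‖(p.1:A)‖ * ‖q.1‖ := by ring
            have c4 : ‖(lmulL J hleft p.2 (q.2 * (eJ:A)) - lmulL J hleft eJ (q.2 * (p.2:A)) : J)‖
                ≤ ‖q.2‖ * (2*δ) := by
              rw [norm_J]
              have hco : ((lmulL J hleft p.2 (q.2 * (eJ:A)) - lmulL J hleft eJ (q.2 * (p.2:A)) : J) : A)
                  = q.2 * ((e * (p.2:A) - (p.2:A)) + ((p.2:A) - (p.2:A) * e)) := by
                show (q.2 * e) * (p.2:A) - (q.2 * (p.2:A)) * e = _
                rw [mul_add, mul_sub, mul_sub, mul_assoc, mul_assoc]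
                abel
              rw [hco]
              refine le_trans (norm_mul_le _ _) (mul_le_mul_of_nonneg_left ?_ (norm_nonneg _))
              refine le_trans (norm_add_le _ _) ?_
              rw [← norm_neg ((p.2:A) - (p.2:A) * e)]
              have : -((p.2:A) - (p.2:A) * e) = (p.2:A) * e - (p.2:A) := by abel
              rw [this]
              linarith
            have d1 := norm_nonneg (rmulL J hright (p.1 * eJ - eJ * p.1) q.1)
            have d2 := norm_nonneg (lmulL J hleft p.2 (q.2 * (eJ:A)))
            have d3 := norm_nonneg (rmulL J hright eJ ((p.1:A) * q.1))
            have d4 := norm_nonneg (lmulL J hleft p.2 (q.2 * (eJ:A)) - lmulL J hleft eJ (q.2 * (p.2:A)))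
            have d5 := norm_nonneg q.1
            have d6 := norm_nonneg q.2
            have d7 := norm_nonneg (p.1:A)
            have d8 := norm_nonneg (p.2:A)
            nlinarith [mul_le_mul c1 c2 d2 (by positivity : (0:ℝ) ≤ (2*δ) * ‖q.1‖),
              mul_le_mul c3 c4 d4 (by positivity : (0:ℝ) ≤ C1 * ‖(p.1:A)‖ * ‖q.1‖)]
          · rw [List.sum_map_mul_left lr (fun q => ‖q.1‖ * ‖q.2‖)
                (2*δ*C1*(‖(p.1:A)‖ + ‖(p.2:A)‖))]
            have hrepn : (List.map (fun q => ‖q.1‖ * ‖q.2‖) lr).sum = repNorm A lr := rfl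
            rw [hrepn]
            have hppos : 0 ≤ ‖(p.1:A)‖ + ‖(p.2:A)‖ := by positivity
            have h2 : ‖(p.1:A)‖ + ‖(p.2:A)‖ ≤ 2 + ‖p.1‖ + ‖p.2‖ := by
              rw [norm_J, norm_J]; linarith
            have h3 := mul_le_mul_of_nonneg_left (mul_le_mul h2 hlrn.le hlrn0 (by positivity))
              (show (0:ℝ) ≤ 2*δ*C1 by positivity)
            nlinarith [h3]
        · rw [List.sum_map_mul_left (L u) (fun p => 2 + ‖p.1‖ + ‖p.2‖) (2*δ*C1*(CA+1))]
      have B2 : repNorm (↥J) (l2.map fun q => (rmulL J hright eJ q.1, lmulL J hleft eJ q.2))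
          ≤ C1^2 * repNorm A l2 := by
        refine repNorm_map_le l2 _ (C1^2) (by positivity) ?_
        intro q hq
        dsimp only
        have n1 : ‖(rmulL J hright eJ q.1 : J)‖ ≤ C1 * ‖q.1‖ := by
          rw [norm_J, rmulL_apply]
          exact le_trans (norm_mul_le _ _) (mul_le_mul_of_nonneg_right hebd (norm_nonneg _))
        have n2 : ‖(lmulL J hleft eJ q.2 : J)‖ ≤ ‖q.2‖ * C1 := by
          rw [norm_J, lmulL_apply]
          exact le_trans (norm_mul_le _ _) (mul_le_mul_of_nonneg_left hebd (norm_nonneg _))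
        have h3 := mul_le_mul n1 n2 (norm_nonneg (lmulL J hleft eJ q.2))
          (by positivity : (0:ℝ) ≤ C1 * ‖q.1‖)
        nlinarith [norm_nonneg q.1, norm_nonneg q.2]
      have B3 : repNorm (↥J) ((L u).flatMap fun p =>
            [(rmulL J hright eJ ((p.1:A)) - p.1, lmulL J hleft eJ ((p.2:A))),
             (p.1, lmulL J hleft eJ ((p.2:A)) - p.2)])
          ≤ (δ*(1+C1)) * Ku u := by
        refine le_trans (repNorm_flatMap_le _ _
          (fun p => (δ*(1+C1)) * (2 + ‖p.1‖ + ‖p.2‖)) ?_) ?_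
        · intro p hp
          obtain ⟨⟨ha1, ha2⟩, ⟨hb1, hb2⟩⟩ := heE u huS p hp
          simp only [repNorm_pair]
          have c1 : ‖(rmulL J hright eJ ((p.1:A)) - p.1 : J)‖ ≤ δ := by
            rw [norm_J]
            show ‖e * (p.1:A) - (p.1:A)‖ ≤ δ
            linarith
          have c2 : ‖(lmulL J hleft eJ ((p.2:A)) : J)‖ ≤ C1 * ‖(p.2:A)‖ := by
            rw [norm_J, lmulL_apply]
            refine le_trans (norm_mul_le _ _) ?_
            rw [mul_comm]
            exact mul_le_mul_of_nonneg_right hebd (norm_nonneg _)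
          have c3 : ‖(lmulL J hleft eJ ((p.2:A)) - p.2 : J)‖ ≤ δ := by
            rw [norm_J]
            show ‖(p.2:A) * e - (p.2:A)‖ ≤ δ
            linarith
          have d1 := norm_nonneg (rmulL J hright eJ ((p.1:A)) - p.1)
          have d2 := norm_nonneg (lmulL J hleft eJ ((p.2:A)))
          have d3 := norm_nonneg (p.1 : ↥J)
          have d4 := norm_nonneg (lmulL J hleft eJ ((p.2:A)) - p.2)
          have d7 : ‖(p.1 : ↥J)‖ = ‖(p.1:A)‖ := norm_J _ _
          have d8 : ‖(p.2 : ↥J)‖ = ‖(p.2:A)‖ := norm_J _ _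
          nlinarith [mul_le_mul c1 c2 d2 hδ.le, mul_le_mul_of_nonneg_left c3 d3,
            norm_nonneg (p.2:A), mul_nonneg (mul_nonneg hδ.le hC1.le) (norm_nonneg (p.1:A)),
            mul_nonneg (mul_nonneg hδ.le hC1.le) (norm_nonneg (p.2:A)),
            mul_nonneg hδ.le (norm_nonneg (p.2:A)), mul_nonneg hδ.le (norm_nonneg (p.1:A)),
            mul_nonneg hδ.le hC1.le]
        · rw [List.sum_map_mul_left (L u) (fun p => 2 + ‖p.1‖ + ‖p.2‖) (δ*(1+C1))]
      have hKuK := hKu_le u huS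
      have hKu0 := hKu_nonneg u
      have hfinal1 : (2*δ*C1*(CA+1)) * Ku u + (δ*(1+C1)) * Ku u ≤ ε / 2 := by
        have hcoef : (0:ℝ) < 2*C1*(CA+1) + 1 + C1 := by nlinarith
        have h1 : K ≠ 0 := ne_of_gt hKpos
        have h2 : (2*C1*(CA+1) + 1 + C1) ≠ 0 := ne_of_gt hcoef
        have hδK : δ * (K * (2*C1*(CA+1) + 1 + C1)) = ε / 2 := by
          rw [hδ_def]
          field_simp
        nlinarith [mul_le_mul_of_nonneg_left hKuK
          (show (0:ℝ) ≤ δ*(2*C1*(CA+1)+1+C1) by positivity)]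
      have hfinal2 : C1^2 * repNorm A l2 < ε / 2 := by
        have h1 : C1^2 * repNorm A l2 ≤ C1^2 * ε₂ := by nlinarith
        have h2 : C1^2 * ε₂ < ε / 2 := by
          rw [hε₂_def]
          have hx : C1^2 * (ε / (2*(C1^2+1))) = ε * (C1^2 / (2*(C1^2+1))) := by ring
          rw [hx]
          have hy : C1^2 / (2*(C1^2+1)) < 1/2 := by
            rw [div_lt_div_iff₀ (by positivity) (by norm_num)]
            nlinarith
          calc ε * (C1^2/(2*(C1^2+1))) < ε * (1/2) := mul_lt_mul_of_pos_left hy hε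
            _ = ε/2 := by ring
        linarith
      linarith
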